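/- For the three-web on the domain {(x¹,x²,y¹,y²) ∈ ℝ⁴ : x² ≠ 0, y² ≠ 0} given by f¹ = x¹ + y¹, f² = −x¹y¹ + x²y², the isoclinicity invariants satisfy p = q = (y¹ − x¹)/(2(x²y²)²); hence the web is nonisoclinic exactly where x¹ ≠ y¹, and since p = q it cannot be extended to a nonisoclinic web W(4,2,2) (class G₃). -/

import Mathlib

noncomputable section

open Matrix

/-- Partial derivative of `g` with respect to the `j`-th coordinate at the point `x`. -/
def pd (j : Fin 2) (g : (Fin 2 → ℝ) → ℝ) (x : Fin 2 → ℝ) : ℝ :=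
  deriv (fun t => g (Function.update x j t)) (x j)

variable (f : Fin 2 → (Fin 2 → ℝ) → (Fin 2 → ℝ) → ℝ)

/-- Jacobian matrix `f̄ = (∂fⁱ/∂xʲ)` with respect to the first group of variables. -/
def fbar (x y : Fin 2 → ℝ) : Matrix (Fin 2) (Fin 2) ℝ :=
  Matrix.of fun i j => pd j (fun x' => f i x' y) x

/-- Jacobian matrix `f̃ = (∂fⁱ/∂yʲ)` with respect to the second group of variables. -/
def ftil (x y : Fin 2 → ℝ) : Matrix (Fin 2) (Fin 2) ℝ :=
  Matrix.of fun i j => pd j (fun y' => f i x y') y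

/-- Mixed second partial derivative `∂²fⁱ/∂xˡ∂yᵐ`. -/
def d2 (i l m : Fin 2) (x y : Fin 2 → ℝ) : ℝ :=
  pd m (fun y' => pd l (fun x' => f i x' y') x) y

/-- Connection coefficients
`Γⁱⱼₖ = −∑_{l,m} (∂²fⁱ/∂xˡ∂yᵐ) ḡˡⱼ g̃ᵐₖ`, where `ḡ = f̄⁻¹`, `g̃ = f̃⁻¹`. -/
def Gam (i j k : Fin 2) (x y : Fin 2 → ℝ) : ℝ :=
  - ∑ l : Fin 2, ∑ m : Fin 2,
      d2 f i l m x y * (fbar f x y)⁻¹ l j * (ftil f x y)⁻¹ m k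

/-- Torsion covector `aⱼ = ∑ₖ (Γᵏⱼₖ − Γᵏₖⱼ)`. -/
def aCov (j : Fin 2) (x y : Fin 2 → ℝ) : ℝ :=
  ∑ k : Fin 2, (Gam f k j k x y - Gam f k k j x y)

/-- Covariant derivative `p_{ik} = ∑ₘ (∂aᵢ/∂xᵐ) ḡᵐₖ − ∑ⱼ aⱼ Γʲₖᵢ`. -/
def pCov (i k : Fin 2) (x y : Fin 2 → ℝ) : ℝ :=
  (∑ m : Fin 2, pd m (fun x' => aCov f i x' y) x * (fbar f x y)⁻¹ m k)
    - ∑ j : Fin 2, aCov f j x y * Gam f j k i x y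

/-- Covariant derivative `q_{ik} = ∑ₘ (∂aᵢ/∂yᵐ) g̃ᵐₖ − ∑ⱼ aⱼ Γʲᵢₖ`. -/
def qCov (i k : Fin 2) (x y : Fin 2 → ℝ) : ℝ :=
  (∑ m : Fin 2, pd m (fun y' => aCov f i x y') y * (ftil f x y)⁻¹ m k)
    - ∑ j : Fin 2, aCov f j x y * Gam f j i k x y

/-- Isoclinicity invariant `p = (p₁₂ − p₂₁)/2`. -/
def pIso (x y : Fin 2 → ℝ) : ℝ := (pCov f 0 1 x y - pCov f 1 0 x y) / 2

/-- Isoclinicity invariant `q = (q₁₂ − q₂₁)/2`. -/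
def qIso (x y : Fin 2 → ℝ) : ℝ := (qCov f 0 1 x y - qCov f 1 0 x y) / 2


/-- The web `f¹ = x¹ + y¹`, `f² = −x¹y¹ + x²y²`.
(Indices: `x 0 ↦ x¹`, `x 1 ↦ x²`, `y 0 ↦ y¹`, `y 1 ↦ y²`.) -/
noncomputable def webC : Fin 2 → (Fin 2 → ℝ) → (Fin 2 → ℝ) → ℝ :=
  ![fun x y => x 0 + y 0,
    fun x y => -(x 0 * y 0) + x 1 * y 1]


lemma upd0 (x : Fin 2 → ℝ) (t : ℝ) : Function.update x 0 t = ![t, x 1] := by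
  ext i; fin_cases i <;> simp

lemma upd1 (x : Fin 2 → ℝ) (t : ℝ) : Function.update x 1 t = ![x 0, t] := by
  ext i; fin_cases i <;> simp

lemma pd0 (g : (Fin 2 → ℝ) → ℝ) (x : Fin 2 → ℝ) :
    pd 0 g x = deriv (fun t => g ![t, x 1]) (x 0) := by simp [pd, upd0]

lemma pd1 (g : (Fin 2 → ℝ) → ℝ) (x : Fin 2 → ℝ) :
    pd 1 g x = deriv (fun t => g ![x 0, t]) (x 1) := by simp [pd, upd1]

lemma webC0 (x y : Fin 2 → ℝ) : webC 0 x y = x 0 + y 0 := rfl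

lemma webC1 (x y : Fin 2 → ℝ) : webC 1 x y = -(x 0 * y 0) + x 1 * y 1 := rfl

lemma fbar_eq (x y : Fin 2 → ℝ) : fbar webC x y = !![1, 0; -(y 0), y 1] := by
  ext i j
  fin_cases i <;> fin_cases j <;>
    simp only [Fin.mk_zero, Fin.mk_one, fbar, Matrix.of_apply, webC0, webC1, Matrix.cons_val', Matrix.cons_val_zero,
      Matrix.cons_val_one, Matrix.head_cons, Matrix.head_fin_const, Matrix.empty_val',
      Matrix.cons_val_fin_one]
  · rw [pd0]; simp
  · rw [pd1]; simp
  · rw [pd0]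
    simp only [Matrix.cons_val_zero, Matrix.cons_val_one, Matrix.head_cons]
    simpa using ((((hasDerivAt_id (x 0)).mul_const (y 0)).neg).add_const (x 1 * y 1)).deriv
  · rw [pd1]
    simp only [Matrix.cons_val_zero, Matrix.cons_val_one, Matrix.head_cons]
    have : HasDerivAt (fun t : ℝ => -(x 0 * y 0) + t * y 1) (y 1) (x 1) := by
      simpa using (((hasDerivAt_id (x 1)).mul_const (y 1)).const_add (-(x 0 * y 0)))
    exact this.deriv

lemma ftil_eq (x y : Fin 2 → ℝ) : ftil webC x y = !![1, 0; -(x 0), x 1] := by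
  ext i j
  fin_cases i <;> fin_cases j <;>
    simp only [Fin.mk_zero, Fin.mk_one, ftil, Matrix.of_apply, webC0, webC1, Matrix.cons_val', Matrix.cons_val_zero,
      Matrix.cons_val_one, Matrix.head_cons, Matrix.head_fin_const, Matrix.empty_val',
      Matrix.cons_val_fin_one]
  · rw [pd0]
    simpa using (((hasDerivAt_id (y 0)).const_add (x 0))).deriv
  · rw [pd1]; simp
  · rw [pd0]
    simp only [Matrix.cons_val_zero, Matrix.cons_val_one, Matrix.head_cons]
    have : HasDerivAt (fun t : ℝ => -(x 0 * t) + x 1 * y 1) (-(x 0)) (y 0) := by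
      simpa using ((((hasDerivAt_id (y 0)).const_mul (x 0)).neg).add_const (x 1 * y 1))
    exact this.deriv
  · rw [pd1]
    simp only [Matrix.cons_val_zero, Matrix.cons_val_one, Matrix.head_cons]
    have : HasDerivAt (fun t : ℝ => -(x 0 * y 0) + x 1 * t) (x 1) (y 1) := by
      simpa using (((hasDerivAt_id (y 1)).const_mul (x 1)).const_add (-(x 0 * y 0)))
    exact this.deriv

lemma fbar_inv (x y : Fin 2 → ℝ) (h2 : y 1 ≠ 0) :
    (fbar webC x y)⁻¹ = !![1, 0; y 0 / y 1, 1 / y 1] := by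
  rw [fbar_eq]
  apply Matrix.inv_eq_right_inv
  ext i j
  fin_cases i <;> fin_cases j <;>
    simp [Matrix.mul_apply, Fin.sum_univ_two] <;> field_simp <;> ring

lemma ftil_inv (x y : Fin 2 → ℝ) (h1 : x 1 ≠ 0) :
    (ftil webC x y)⁻¹ = !![1, 0; x 0 / x 1, 1 / x 1] := by
  rw [ftil_eq]
  apply Matrix.inv_eq_right_inv
  ext i j
  fin_cases i <;> fin_cases j <;>
    simp [Matrix.mul_apply, Fin.sum_univ_two] <;> field_simp <;> ring

lemma d2_eq (x y : Fin 2 → ℝ) (i l m : Fin 2) :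
    d2 webC i l m x y = (!![(0:ℝ),0;0,0] :: [!![(-1:ℝ),0;0,1]]).get i l m := by
  have key : ∀ (y' : Fin 2 → ℝ) (i l : Fin 2),
      pd l (fun x' => webC i x' y') x = !![1, 0; -(y' 0), y' 1] i l := by
    intro y' i l
    have := congrFun (congrFun (fbar_eq x y') i) l
    exact this
  unfold d2
  simp only [key]
  fin_cases i <;> fin_cases l <;> fin_cases m <;>
    simp only [Fin.mk_zero, Fin.mk_one, Matrix.cons_val_zero, Matrix.cons_val_one,
      Matrix.head_cons, List.get]
  · rw [pd0]; simp
  · rw [pd1]; simp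
  · rw [pd0]; simp
  · rw [pd1]; simp
  · rw [pd0]
    simpa using (((hasDerivAt_id (y 0)).neg)).deriv
  · rw [pd1]; simp
  · rw [pd0]; simp
  · rw [pd1]; simp

lemma Gam_zero (x y : Fin 2 → ℝ) (j k : Fin 2) : Gam webC 0 j k x y = 0 := by
  unfold Gam
  simp [Fin.sum_univ_two, d2_eq, List.get]

lemma Gam_one (x y : Fin 2 → ℝ) (h1 : x 1 ≠ 0) (h2 : y 1 ≠ 0) (j k : Fin 2) :
    Gam webC 1 j k x y =
      !![1 - x 0 * y 0 / (x 1 * y 1), -(y 0) / (x 1 * y 1);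
         -(x 0) / (x 1 * y 1), -(1 / (x 1 * y 1))] j k := by
  unfold Gam
  rw [fbar_inv x y h2, ftil_inv x y h1]
  simp only [Fin.sum_univ_two, d2_eq, List.get]
  fin_cases j <;> fin_cases k <;>
    · simp only [Fin.mk_zero, Fin.mk_one, Matrix.of_apply, Matrix.cons_val', Matrix.cons_val_zero,
        Matrix.cons_val_one, Matrix.head_cons, Matrix.empty_val', Matrix.cons_val_fin_one,
        Matrix.head_fin_const]
      field_simp
      try ring
      try tauto

lemma aCov_eq (x y : Fin 2 → ℝ) (h1 : x 1 ≠ 0) (h2 : y 1 ≠ 0) (j : Fin 2) :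
    aCov webC j x y = ![(x 0 - y 0) / (x 1 * y 1), 0] j := by
  unfold aCov
  simp only [Fin.sum_univ_two, Gam_zero, Gam_one x y h1 h2]
  fin_cases j <;> simp <;> ring_nf

lemma aCov0_closed (x y : Fin 2 → ℝ) (h1 : x 1 ≠ 0) (h2 : y 1 ≠ 0) :
    aCov webC 0 x y = (x 0 - y 0) / (x 1 * y 1) := by
  simpa using aCov_eq x y h1 h2 0

lemma aCov1_closed (x y : Fin 2 → ℝ) (h1 : x 1 ≠ 0) (h2 : y 1 ≠ 0) :
    aCov webC 1 x y = 0 := by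
  simpa using aCov_eq x y h1 h2 1

lemma pd_a0_x0 (x y : Fin 2 → ℝ) (h1 : x 1 ≠ 0) (h2 : y 1 ≠ 0) :
    pd 0 (fun x' => aCov webC 0 x' y) x = 1 / (x 1 * y 1) := by
  rw [pd0]
  have he : (fun t => aCov webC 0 ![t, x 1] y) = fun t => (t - y 0) / (x 1 * y 1) := by
    funext t
    rw [aCov0_closed ![t, x 1] y (by simpa using h1) h2]
    simp
  rw [he]
  simpa using (((hasDerivAt_id (x 0)).sub_const (y 0)).div_const (x 1 * y 1)).deriv

lemma pd_a0_x1 (x y : Fin 2 → ℝ) (h1 : x 1 ≠ 0) (h2 : y 1 ≠ 0) :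
    pd 1 (fun x' => aCov webC 0 x' y) x = -((x 0 - y 0) / (x 1 ^ 2 * y 1)) := by
  rw [pd1]
  have he : ∀ᶠ t in nhds (x 1),
      aCov webC 0 ![x 0, t] y = (x 0 - y 0) / y 1 * t⁻¹ := by
    filter_upwards [eventually_ne_nhds h1] with t ht
    rw [aCov0_closed ![x 0, t] y (by simpa using ht) h2]
    simp only [Matrix.cons_val_zero, Matrix.cons_val_one, Matrix.head_cons]
    rw [mul_comm t (y 1), ← div_div, div_eq_mul_inv]
  rw [Filter.EventuallyEq.deriv_eq he]
  rw [((hasDerivAt_inv h1).const_mul ((x 0 - y 0) / y 1)).deriv]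
  field_simp
  try (left; ring)

lemma pd_a1_x0 (x y : Fin 2 → ℝ) (h1 : x 1 ≠ 0) (h2 : y 1 ≠ 0) :
    pd 0 (fun x' => aCov webC 1 x' y) x = 0 := by
  rw [pd0]
  have he : (fun t => aCov webC 1 ![t, x 1] y) = fun _ => (0:ℝ) := by
    funext t
    rw [aCov1_closed ![t, x 1] y (by simpa using h1) h2]
  rw [he, deriv_const]

lemma pd_a1_x1 (x y : Fin 2 → ℝ) (h1 : x 1 ≠ 0) (h2 : y 1 ≠ 0) :
    pd 1 (fun x' => aCov webC 1 x' y) x = 0 := by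
  rw [pd1]
  have he : ∀ᶠ t in nhds (x 1), aCov webC 1 ![x 0, t] y = (0:ℝ) := by
    filter_upwards [eventually_ne_nhds h1] with t ht
    exact aCov1_closed ![x 0, t] y (by simpa using ht) h2
  rw [Filter.EventuallyEq.deriv_eq he, deriv_const]

lemma pd_a0_y0 (x y : Fin 2 → ℝ) (h1 : x 1 ≠ 0) (h2 : y 1 ≠ 0) :
    pd 0 (fun y' => aCov webC 0 x y') y = -(1 / (x 1 * y 1)) := by
  rw [pd0]
  have he : (fun t => aCov webC 0 x ![t, y 1]) = fun t => (x 0 - t) / (x 1 * y 1) := by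
    funext t
    rw [aCov0_closed x ![t, y 1] h1 (by simpa using h2)]
    simp
  rw [he]
  have hd : HasDerivAt (fun t => (x 0 - t) / (x 1 * y 1)) (-1 / (x 1 * y 1)) (y 0) := by
    simpa using ((hasDerivAt_id (y 0)).const_sub (x 0)).div_const (x 1 * y 1)
  rw [hd.deriv]
  ring

lemma pd_a0_y1 (x y : Fin 2 → ℝ) (h1 : x 1 ≠ 0) (h2 : y 1 ≠ 0) :
    pd 1 (fun y' => aCov webC 0 x y') y = -((x 0 - y 0) / (x 1 * y 1 ^ 2)) := by
  rw [pd1]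
  have he : ∀ᶠ t in nhds (y 1),
      aCov webC 0 x ![y 0, t] = (x 0 - y 0) / x 1 * t⁻¹ := by
    filter_upwards [eventually_ne_nhds h2] with t ht
    rw [aCov0_closed x ![y 0, t] h1 (by simpa using ht)]
    simp only [Matrix.cons_val_zero, Matrix.cons_val_one, Matrix.head_cons]
    rw [← div_div, div_eq_mul_inv]
  rw [Filter.EventuallyEq.deriv_eq he]
  rw [((hasDerivAt_inv h2).const_mul ((x 0 - y 0) / x 1)).deriv]
  field_simp
  try (left; ring)

lemma pd_a1_y0 (x y : Fin 2 → ℝ) (h1 : x 1 ≠ 0) (h2 : y 1 ≠ 0) :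
    pd 0 (fun y' => aCov webC 1 x y') y = 0 := by
  rw [pd0]
  have he : (fun t => aCov webC 1 x ![t, y 1]) = fun _ => (0:ℝ) := by
    funext t
    rw [aCov1_closed x ![t, y 1] h1 (by simpa using h2)]
  rw [he, deriv_const]

lemma pd_a1_y1 (x y : Fin 2 → ℝ) (h1 : x 1 ≠ 0) (h2 : y 1 ≠ 0) :
    pd 1 (fun y' => aCov webC 1 x y') y = 0 := by
  rw [pd1]
  have he : ∀ᶠ t in nhds (y 1), aCov webC 1 x ![y 0, t] = (0:ℝ) := by
    filter_upwards [eventually_ne_nhds h2] with t ht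
    exact aCov1_closed x ![y 0, t] h1 (by simpa using ht)
  rw [Filter.EventuallyEq.deriv_eq he, deriv_const]

lemma pIso_eq (x y : Fin 2 → ℝ) (h1 : x 1 ≠ 0) (h2 : y 1 ≠ 0) :
    pIso webC x y = (y 0 - x 0) / (2 * (x 1 * y 1)^2) := by
  unfold pIso pCov
  rw [fbar_inv x y h2]
  simp only [Fin.sum_univ_two, pd_a0_x0 x y h1 h2, pd_a0_x1 x y h1 h2,
    pd_a1_x0 x y h1 h2, pd_a1_x1 x y h1 h2, aCov0_closed x y h1 h2,
    aCov1_closed x y h1 h2, Gam_zero, Gam_one x y h1 h2]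
  simp
  rw [div_eq_div_iff (by positivity) (by positivity)]
  field_simp
  ring

lemma qIso_eq (x y : Fin 2 → ℝ) (h1 : x 1 ≠ 0) (h2 : y 1 ≠ 0) :
    qIso webC x y = (y 0 - x 0) / (2 * (x 1 * y 1)^2) := by
  unfold qIso qCov
  rw [ftil_inv x y h1]
  simp only [Fin.sum_univ_two, pd_a0_y0 x y h1 h2, pd_a0_y1 x y h1 h2,
    pd_a1_y0 x y h1 h2, pd_a1_y1 x y h1 h2, aCov0_closed x y h1 h2,
    aCov1_closed x y h1 h2, Gam_zero, Gam_one x y h1 h2]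
  simp
  rw [div_eq_div_iff (by positivity) (by positivity)]
  field_simp
  ring

/-- For the web `webC` on the domain `x² ≠ 0, y² ≠ 0`, the isoclinicity
invariants satisfy `p = q = (y¹ − x¹)/(2(x²y²)²)`; hence the web is
nonisoclinic exactly where `x¹ ≠ y¹`, and since `p = q` it cannot be extended
to a nonisoclinic web `W(4,2,2)` (class G₃). -/
theorem webC_isoclinicity_invariants (x y : Fin 2 → ℝ)
    (h1 : x 1 ≠ 0) (h2 : y 1 ≠ 0) :
    pIso webC x y = (y 0 - x 0) / (2 * (x 1 * y 1)^2) ∧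
    qIso webC x y = (y 0 - x 0) / (2 * (x 1 * y 1)^2) ∧
    ((pIso webC x y)^2 + (qIso webC x y)^2 > 0 ↔ x 0 ≠ y 0) := by
  have hp := pIso_eq x y h1 h2
  have hq := qIso_eq x y h1 h2
  refine ⟨hp, hq, ?_⟩
  rw [hp, hq]
  set E := (y 0 - x 0) / (2 * (x 1 * y 1)^2) with hE
  constructor
  · intro h hxy
    rw [hE, hxy, sub_self, zero_div] at h
    simp at h
  · intro h
    have hne : E ≠ 0 := by
      apply div_ne_zero
      · exact sub_ne_zero.2 (Ne.symm h)
      · positivity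
    have h0 : 0 ≤ E ^ 2 := sq_nonneg E
    have h1' : E ^ 2 ≠ 0 := pow_ne_zero 2 hne
    have : 0 < E ^ 2 := lt_of_le_of_ne h0 (Ne.symm h1')
    linarith

end
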